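/- Let $k\ge 3$, $\ell\ge 2$ be integers and $0<\varepsilon<1/4$. Let $G=(V_1\cup\cdots\cup V_\ell,E)$ be an $\ell$-partite graph with $d(V_i,V_j)\ge \frac{k-2}{k-1}$ for all $i\ne j$. Suppose each $V_i$ is partitioned as $V_i = X_i^{(1)}\,\dot\cup\cdots\dot\cup\, X_i^{(k-1)}\,\dot\cup\, T_i$ with $|X_i^{(1)}|\ge\cdots\ge|X_i^{(k-1)}|$ and $|T_i|\le\varepsilon|V_i|$, and for each $s\le k-1$ the set $\bigcup_{i\le\ell} X_i^{(s)}$ is independent in $G$. Then for each $s\le k-1$ there is at most one index $i\le\ell$ with $|X_i^{(s)}|/|V_i| > \frac{1}{k-1}+\sqrt{\varepsilon}$; consequently there is a set $I_0$ of at most $k-1$ indices such that $|X_i^{(s)}| = \left(\frac{1}{k-1}\pm k\sqrt{\varepsilon}\right)|V_i|$ for all $s\le k-1$ and all $i\notin I_0$. -/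

import Mathlib

open Finset

/-- Number of edges (ordered pairs) between `A` and `B`. -/
noncomputable def eBetween {V : Type*} (G : SimpleGraph V) (A B : Finset V) : ℕ :=
  Nat.card {p : V × V // p.1 ∈ A ∧ p.2 ∈ B ∧ G.Adj p.1 p.2}

/-- Edge density between two disjoint vertex sets. -/
noncomputable def density {V : Type*} (G : SimpleGraph V) (A B : Finset V) : ℝ :=
  (eBetween G A B : ℝ) / ((A.card : ℝ) * (B.card : ℝ))

/-- Number of neighbours of `v` inside the set `S`. -/
noncomputable def degTo {V : Type*} (G : SimpleGraph V) (v : V) (S : Set V) : ℕ :=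
  Nat.card {u : V // u ∈ S ∧ G.Adj v u}

/-- `G` is an `ℓ`-partite graph with (nonempty, independent) parts `P 0, …, P (ℓ-1)`. -/
def IsPartiteOn {V : Type*} (G : SimpleGraph V) {ℓ : ℕ} (P : Fin ℓ → Finset V) : Prop :=
  (∀ i, (P i).Nonempty) ∧ (∀ i j, i ≠ j → Disjoint (P i) (P j)) ∧
  (∀ v, ∃ i, v ∈ P i) ∧ ∀ i, ∀ a ∈ P i, ∀ b ∈ P i, ¬ G.Adj a b

/-- `G` contains a copy of `H` (an injective graph homomorphism). -/
def ContainsCopy {W V : Type*} (H : SimpleGraph W) (G : SimpleGraph V) : Prop :=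
  ∃ f : W → V, Function.Injective f ∧ ∀ a b, H.Adj a b → G.Adj (f a) (f b)

/-- `H` admits a colouring with `χ(H) - 1` colours in which all colour classes are
independent except the first, which induces a graph of maximum degree at most 1. -/
def AlmostColourCritical {W : Type*} [Fintype W] (H : SimpleGraph W) : Prop :=
  ∃ k : ℕ, H.chromaticNumber = (k : ℕ∞) ∧
    ∃ φ : W → Fin (k - 1),
      (∀ a b c : W, (φ a).val = 0 → (φ b).val = 0 → (φ c).val = 0 →
        H.Adj a b → H.Adj a c → b = c) ∧
      ∀ a b : W, (φ a).val ≠ 0 → φ a = φ b → ¬ H.Adj a b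

lemma eBetween_eq_card {V : Type*} [Fintype V] (G : SimpleGraph V) [DecidableRel G.Adj]
    (A B : Finset V) :
    eBetween G A B = ((A ×ˢ B).filter fun p => G.Adj p.1 p.2).card := by
  have e : {p : V × V // p.1 ∈ A ∧ p.2 ∈ B ∧ G.Adj p.1 p.2} ≃
      {p : V × V // p ∈ (A ×ˢ B).filter fun p => G.Adj p.1 p.2} :=
    Equiv.subtypeEquivRight (by intro p; simp [Finset.mem_filter, Finset.mem_product, and_assoc])
  rw [eBetween, Nat.card_congr e, Nat.card_eq_fintype_card, Fintype.card_coe]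

lemma crux1 (m δ : ℝ) (hm : 2 ≤ m) (hδ0 : 0 < δ) (hδ : δ < 1/2) :
    δ < m * (1 - δ^2) := by
  have h1 : δ^2 < 1/4 := by nlinarith
  nlinarith [mul_nonneg (by linarith : (0:ℝ) ≤ m - 2) (by nlinarith : (0:ℝ) ≤ 1 - δ^2)]

lemma scalar (m p δ A B C D : ℝ) (hm : 2 ≤ m) (hp : 1 ≤ p) (hpm : p + 1 ≤ m)
    (hδ0 : 0 < δ) (hδ : δ < 1/2)
    (hA : p * (1/m + δ) ≤ A) (hC : p * (1/m + δ) ≤ C)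
    (hB : 0 ≤ B) (hD : 0 ≤ D)
    (hAB1 : A + B ≤ 1) (hCD1 : C + D ≤ 1)
    (hABl : 1 - δ^2 ≤ A + B) (hCDl : 1 - δ^2 ≤ C + D)
    (hsum : A*C/p + B*D/(m-p) ≤ 1/m) : False := by
  have hm0 : (0:ℝ) < m := by linarith
  have hp0 : (0:ℝ) < p := by linarith
  have hq0 : (0:ℝ) < m - p := by linarith
  set L : ℝ := p * (1/m + δ) with hLdef
  have hL0 : 0 < L := by positivity
  have hmL : m * L = p + p*m*δ := by
    rw [hLdef, mul_comm, mul_assoc, add_mul, one_div_mul_cancel hm0.ne']; ring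
  set H : ℝ := 1 - δ^2 with hHdef
  have hH0 : (0:ℝ) < H := by nlinarith
  have key : m*(m-p)*(A*C) + m*p*(B*D) ≤ p*(m-p) := by
    have h1 := mul_le_mul_of_nonneg_right hsum (le_of_lt (by positivity : (0:ℝ) < m*p*(m-p)))
    calc m*(m-p)*(A*C) + m*p*(B*D)
        = (A*C/p + B*D/(m-p)) * (m*p*(m-p)) := by field_simp
      _ ≤ 1/m * (m*p*(m-p)) := h1
      _ = p*(m-p) := by field_simp
  -- V2 : p*(m-p) < m*(m-p)*(H*L)
  have V2 : p*(m-p) < m*(m-p)*(H*L) := by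
    have c1 := crux1 m δ hm hδ0 hδ
    have c2 : 0 < p*(m-p)*δ := by positivity
    have e : m*(m-p)*(H*L) = (m-p)*H*(m*L) := by ring
    rw [e, hmL, hHdef]
    nlinarith [mul_pos c2 (by linarith : (0:ℝ) < m*(1-δ^2) - δ)]
  -- V1 : p*(m-p) < m*(m-p)*L^2 + m*p*(H-L)^2
  have V1 : p*(m-p) < m*(m-p)*L^2 + m*p*(H-L)^2 := by
    have big : m*(p*(m-p)) < (m-p)*(m*L)^2 + p*(m*H - m*L)^2 := by
      rw [hmL, hHdef]
      have crux2 : 0 < (m-p)*p*m + m*(δ+p)^2 - 2*(m-p) := by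
        nlinarith [mul_nonneg hq0.le (by nlinarith : (0:ℝ) ≤ p*m - 2),
          mul_pos hm0 (by positivity : (0:ℝ) < (δ+p)^2)]
      have pos : 0 < p*m*δ^2 * ((m-p)*p*m + m*(δ+p)^2 - 2*(m-p)) :=
        mul_pos (by positivity) crux2
      have id1 : (m-p)*(p+p*m*δ)^2 + p*(m*(1-δ^2) - (p+p*m*δ))^2 - m*(p*(m-p))
          = p*m*δ^2 * ((m-p)*p*m + m*(δ+p)^2 - 2*(m-p)) := by ring
      linarith [pos, id1.ge, id1.le]
    have e4 : (m-p)*(m*L)^2 + p*(m*H - m*L)^2 = m*(m*(m-p)*L^2 + m*p*(H-L)^2) := by ring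
    rw [e4] at big
    exact lt_of_mul_lt_mul_left big hm0.le
  by_cases hA1 : H ≤ A
  · have hAC : H*L ≤ A*C := mul_le_mul hA1 hC (le_of_lt hL0) (by linarith)
    linarith [key, V2, mul_le_mul_of_nonneg_left hAC (le_of_lt (by positivity : (0:ℝ) < m*(m-p))),
      mul_nonneg (by positivity : (0:ℝ) ≤ m*p) (mul_nonneg hB hD)]
  · by_cases hC1 : H ≤ C
    · have hAC : H*L ≤ A*C := by
        linarith [mul_le_mul hC1 hA (le_of_lt hL0) (by linarith : (0:ℝ) ≤ C), mul_comm C A]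
      linarith [key, V2, mul_le_mul_of_nonneg_left hAC (le_of_lt (by positivity : (0:ℝ) < m*(m-p))),
        mul_nonneg (by positivity : (0:ℝ) ≤ m*p) (mul_nonneg hB hD)]
    · push_neg at hA1 hC1
      have hB' : H - A ≤ B := by linarith
      have hD' : H - C ≤ D := by linarith
      have hBD : (H-A)*(H-C) ≤ B*D :=
        mul_le_mul hB' hD' (by linarith) (by linarith)
      have key2 : m*(m-p)*(A*C) + m*p*((H-A)*(H-C)) ≤ p*(m-p) := by
        linarith [key, mul_le_mul_of_nonneg_left hBD (le_of_lt (by positivity : (0:ℝ) < m*p))]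
      by_cases hs : 0 ≤ (m-p)*C - p*(H-C)
      · have key3 : m*(m-p)*(L*C) + m*p*((H-L)*(H-C)) ≤ p*(m-p) := by
          linarith [key2, mul_nonneg (by linarith : (0:ℝ) ≤ A - L) (mul_nonneg (le_of_lt hm0) hs)]
        by_cases hs2 : 0 ≤ (m-p)*L - p*(H-L)
        · have key4 : m*(m-p)*L^2 + m*p*(H-L)^2 ≤ p*(m-p) := by
            linarith [key3, mul_nonneg (by linarith : (0:ℝ) ≤ C - L) (mul_nonneg (le_of_lt hm0) hs2)]
          linarith [V1]
        · push_neg at hs2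
          have key5 : m*(m-p)*(L*H) ≤ p*(m-p) := by
            linarith [key3, mul_nonneg (by linarith : (0:ℝ) ≤ H - C)
              (mul_nonneg (le_of_lt hm0) (by linarith : (0:ℝ) ≤ p*(H-L) - (m-p)*L))]
          linarith [V2, key5, mul_comm L H]
      · push_neg at hs
        have key6 : m*(m-p)*(H*L) ≤ p*(m-p) := by
          have step1 : m*(m-p)*(H*C) ≤ p*(m-p) := by
            linarith [key2, mul_nonneg (by linarith : (0:ℝ) ≤ H - A)
              (mul_nonneg (le_of_lt hm0) (by linarith : (0:ℝ) ≤ p*(H-C) - (m-p)*C))]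
          linarith [step1, mul_le_mul_of_nonneg_left hC (le_of_lt (by positivity : (0:ℝ) < m*(m-p)*H))]
        linarith [V2]

set_option maxHeartbeats 1000000 in
theorem balanced_classes {V : Type*} [Fintype V] (G : SimpleGraph V) (k ℓ : ℕ) (ε : ℝ)
    (hk : 3 ≤ k) (hℓ : 2 ≤ ℓ) (hε0 : 0 < ε) (hε : ε < 1 / 4)
    (P : Fin ℓ → Finset V) (X : Fin ℓ → Fin (k - 1) → Finset V) (T : Fin ℓ → Finset V)
    (hpart : IsPartiteOn G P)
    (hdens : ∀ i j, i ≠ j → ((k : ℝ) - 2) / ((k : ℝ) - 1) ≤ density G (P i) (P j))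
    (hXsub : ∀ i s, X i s ⊆ P i) (hTsub : ∀ i, T i ⊆ P i)
    (hdisj : ∀ i, ∀ s t, s ≠ t → Disjoint (X i s) (X i t))
    (hTdisj : ∀ i s, Disjoint (X i s) (T i))
    (hcover : ∀ i, ∀ v ∈ P i, v ∈ T i ∨ ∃ s, v ∈ X i s)
    (hmono : ∀ i, ∀ s t : Fin (k - 1), s ≤ t → (X i t).card ≤ (X i s).card)
    (hT : ∀ i, ((T i).card : ℝ) ≤ ε * (P i).card)
    (hind : ∀ s : Fin (k - 1), ∀ i j, ∀ a ∈ X i s, ∀ b ∈ X j s, ¬ G.Adj a b) :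
    (∀ s : Fin (k - 1), ∀ i j : Fin ℓ,
        (1 / ((k : ℝ) - 1) + Real.sqrt ε) * (P i).card < ((X i s).card : ℝ) →
        (1 / ((k : ℝ) - 1) + Real.sqrt ε) * (P j).card < ((X j s).card : ℝ) → i = j) ∧
      ∃ I₀ : Finset (Fin ℓ), I₀.card ≤ k - 1 ∧
        ∀ i ∉ I₀, ∀ s : Fin (k - 1),
          (1 / ((k : ℝ) - 1) - k * Real.sqrt ε) * (P i).card ≤ ((X i s).card : ℝ) ∧
          ((X i s).card : ℝ) ≤ (1 / ((k : ℝ) - 1) + k * Real.sqrt ε) * (P i).card := by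
  classical
  obtain ⟨hne, hPdisj, hPcov, hPind⟩ := hpart
  set δ : ℝ := Real.sqrt ε with hδdef
  have hδ0 : 0 < δ := Real.sqrt_pos.2 hε0
  have hδsq : δ^2 = ε := Real.sq_sqrt hε0.le
  have hδhalf : δ < 1/2 := by nlinarith [hδ0]
  have hkR : (3:ℝ) ≤ (k:ℝ) := by exact_mod_cast hk
  have hm0R : (0:ℝ) < (k:ℝ) - 1 := by linarith
  have hmcast : ((k - 1 : ℕ) : ℝ) = (k:ℝ) - 1 := by
    have : (1:ℕ) ≤ k := by omega
    push_cast [Nat.cast_sub this]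
    ring
  have hPpos : ∀ i : Fin ℓ, (0:ℝ) < ((P i).card : ℝ) := by
    intro i
    exact_mod_cast Finset.card_pos.2 (hne i)
  -- sum of X's is at most |P i|
  have hsumX : ∀ i, (∑ t, ((X i t).card : ℝ)) ≤ ((P i).card : ℝ) := by
    intro i
    have h1 : (univ : Finset (Fin (k-1))).biUnion (X i) ⊆ P i := by
      intro v hv
      obtain ⟨t, _, hvt⟩ := Finset.mem_biUnion.1 hv
      exact hXsub i t hvt
    have h2 : ((univ : Finset (Fin (k-1))).biUnion (X i)).card = ∑ t, (X i t).card :=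
      Finset.card_biUnion (fun s _ t _ hst => hdisj i s t hst)
    have := Finset.card_le_card h1
    rw [h2] at this
    exact_mod_cast this
  -- sum of X's is at least (1-ε)|P i|
  have hsumXT : ∀ i, ((P i).card : ℝ) - ε * ((P i).card : ℝ) ≤ ∑ t, ((X i t).card : ℝ) := by
    intro i
    have h1 : P i ⊆ T i ∪ (univ : Finset (Fin (k-1))).biUnion (X i) := by
      intro v hv
      rcases hcover i v hv with h | ⟨s, hs⟩
      · exact Finset.mem_union_left _ h
      · exact Finset.mem_union_right _ (Finset.mem_biUnion.2 ⟨s, Finset.mem_univ s, hs⟩)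
    have h2 : ((univ : Finset (Fin (k-1))).biUnion (X i)).card = ∑ t, (X i t).card :=
      Finset.card_biUnion (fun s _ t _ hst => hdisj i s t hst)
    have h3 : (P i).card ≤ (T i).card + ∑ t, (X i t).card := by
      calc (P i).card ≤ (T i ∪ (univ : Finset (Fin (k-1))).biUnion (X i)).card :=
            Finset.card_le_card h1
        _ ≤ (T i).card + ((univ : Finset (Fin (k-1))).biUnion (X i)).card :=
            Finset.card_union_le _ _
        _ = (T i).card + ∑ t, (X i t).card := by rw [h2]
    have h3' : ((P i).card : ℝ) ≤ ((T i).card : ℝ) + ∑ t, ((X i t).card : ℝ) := by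
      exact_mod_cast h3
    linarith [hT i]
  -- key edge counting inequality
  have hkey : ∀ i j : Fin ℓ, i ≠ j →
      (∑ t, ((X i t).card : ℝ) * ((X j t).card : ℝ)) ≤
        (1/((k:ℝ)-1)) * (((P i).card : ℝ) * ((P j).card : ℝ)) := by
    intro i j hij
    set E := (P i ×ˢ P j).filter (fun p => G.Adj p.1 p.2) with hE
    set N := (univ : Finset (Fin (k-1))).biUnion (fun t => X i t ×ˢ X j t) with hN
    have hNcard : N.card = ∑ t, (X i t).card * (X j t).card := by
      rw [hN, Finset.card_biUnion]
      · exact Finset.sum_congr rfl (fun t _ => Finset.card_product _ _)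
      · intro s _ t _ hst
        rw [Function.onFun, Finset.disjoint_left]
        rintro ⟨a, b⟩ hab hab'
        rw [Finset.mem_product] at hab hab'
        exact Finset.disjoint_left.1 (hdisj i s t hst) hab.1 hab'.1
    have hdisjEN : Disjoint E N := by
      rw [Finset.disjoint_left]
      rintro ⟨a, b⟩ hab hab'
      rw [hE, Finset.mem_filter] at hab
      rw [hN, Finset.mem_biUnion] at hab'
      obtain ⟨t, _, habt⟩ := hab'
      rw [Finset.mem_product] at habt
      exact hind t i j a habt.1 b habt.2 hab.2
    have hsub : E ∪ N ⊆ P i ×ˢ P j := by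
      apply Finset.union_subset
      · exact Finset.filter_subset _ _
      · intro p hp
        rw [hN, Finset.mem_biUnion] at hp
        obtain ⟨t, _, hpt⟩ := hp
        rw [Finset.mem_product] at hpt ⊢
        exact ⟨hXsub i t hpt.1, hXsub j t hpt.2⟩
    have hnat : E.card + N.card ≤ (P i).card * (P j).card := by
      calc E.card + N.card = (E ∪ N).card := (Finset.card_union_of_disjoint hdisjEN).symm
        _ ≤ (P i ×ˢ P j).card := Finset.card_le_card hsub
        _ = (P i).card * (P j).card := Finset.card_product _ _
    have hEB : eBetween G (P i) (P j) = E.card := eBetween_eq_card G _ _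
    have hPiPj : (0:ℝ) < ((P i).card : ℝ) * ((P j).card : ℝ) :=
      mul_pos (hPpos i) (hPpos j)
    have he : ((k:ℝ)-2)/((k:ℝ)-1) * (((P i).card : ℝ) * ((P j).card : ℝ)) ≤ (E.card : ℝ) := by
      have := hdens i j hij
      rw [density, hEB] at this
      exact (le_div_iff₀ hPiPj).1 this
    have hr : 1 - ((k:ℝ)-2)/((k:ℝ)-1) = 1/((k:ℝ)-1) := by
      field_simp
      ring
    have hnat' : (E.card : ℝ) + ∑ t, ((X i t).card : ℝ) * ((X j t).card : ℝ) ≤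
        ((P i).card : ℝ) * ((P j).card : ℝ) := by
      have h := hnat
      rw [hNcard] at h
      exact_mod_cast h
    nlinarith [he, hnat', hPiPj]
  -- Part 1
  have part1 : ∀ s : Fin (k - 1), ∀ i j : Fin ℓ,
      (1 / ((k : ℝ) - 1) + Real.sqrt ε) * (P i).card < ((X i s).card : ℝ) →
      (1 / ((k : ℝ) - 1) + Real.sqrt ε) * (P j).card < ((X j s).card : ℝ) → i = j := by
    intro s i j hi hj
    by_contra hij
    have hPi := hPpos i
    have hPj := hPpos j
    set x : Fin (k-1) → ℝ := fun t => ((X i t).card : ℝ) / ((P i).card : ℝ) with hxdef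
    set y : Fin (k-1) → ℝ := fun t => ((X j t).card : ℝ) / ((P j).card : ℝ) with hydef
    have hxanti : ∀ t u : Fin (k-1), t ≤ u → x u ≤ x t := by
      intro t u htu
      have hc : ((X i u).card : ℝ) ≤ ((X i t).card : ℝ) := by exact_mod_cast hmono i t u htu
      exact (div_le_div_iff_of_pos_right hPi).2 hc
    have hyanti : ∀ t u : Fin (k-1), t ≤ u → y u ≤ y t := by
      intro t u htu
      have hc : ((X j u).card : ℝ) ≤ ((X j t).card : ℝ) := by exact_mod_cast hmono j t u htu
      exact (div_le_div_iff_of_pos_right hPj).2 hc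
    have hxnn : ∀ t, 0 ≤ x t := fun t => by positivity
    have hynn : ∀ t, 0 ≤ y t := fun t => by positivity
    have hxs : 1/((k:ℝ)-1) + δ < x s := (lt_div_iff₀ hPi).2 hi
    have hys : 1/((k:ℝ)-1) + δ < y s := (lt_div_iff₀ hPj).2 hj
    have hsx1 : ∑ t, x t ≤ 1 := by
      rw [hxdef, ← Finset.sum_div]
      exact (div_le_one hPi).2 (hsumX i)
    have hsy1 : ∑ t, y t ≤ 1 := by
      rw [hydef, ← Finset.sum_div]
      exact (div_le_one hPj).2 (hsumX j)
    have hsxl : 1 - ε ≤ ∑ t, x t := by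
      rw [hxdef, ← Finset.sum_div]
      rw [le_div_iff₀ hPi]
      calc (1 - ε) * ((P i).card : ℝ) = ((P i).card : ℝ) - ε * (P i).card := by ring
        _ ≤ _ := hsumXT i
    have hsyl : 1 - ε ≤ ∑ t, y t := by
      rw [hydef, ← Finset.sum_div]
      rw [le_div_iff₀ hPj]
      calc (1 - ε) * ((P j).card : ℝ) = ((P j).card : ℝ) - ε * (P j).card := by ring
        _ ≤ _ := hsumXT j
    have hxysum : ∑ t, x t * y t ≤ 1/((k:ℝ)-1) := by
      have heq : ∀ t, x t * y t = ((X i t).card : ℝ) * ((X j t).card : ℝ) /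
          (((P i).card : ℝ) * ((P j).card : ℝ)) := by
        intro t
        rw [hxdef, hydef]
        field_simp
      rw [Finset.sum_congr rfl (fun t _ => heq t), ← Finset.sum_div]
      rw [div_le_iff₀ (mul_pos hPi hPj)]
      calc (∑ t, ((X i t).card : ℝ) * ((X j t).card : ℝ)) ≤
          (1/((k:ℝ)-1)) * (((P i).card : ℝ) * ((P j).card : ℝ)) := hkey i j hij
        _ = 1 / ((k:ℝ) - 1) * (((P i).card : ℝ) * ((P j).card : ℝ)) := by ring
    have hmv : Monovary x y := by
      intro a b hab
      rcases le_total a b with h | h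
      · exact absurd (hyanti a b h) (not_le.2 hab)
      · exact hxanti b a h
    have hunion : Finset.Iic s ∪ Finset.Ioi s = (univ : Finset (Fin (k-1))) := by
      ext t
      simp [Finset.mem_Iic, Finset.mem_Ioi, le_or_gt]
    have hdisjI : Disjoint (Finset.Iic s) (Finset.Ioi s) := by
      rw [Finset.disjoint_left]
      intro t ht ht'
      rw [Finset.mem_Iic] at ht
      rw [Finset.mem_Ioi] at ht'
      exact absurd ht (not_le.2 ht')
    have hsplit : ∀ f : Fin (k-1) → ℝ, ∑ t, f t =
        (∑ t ∈ Finset.Iic s, f t) + ∑ t ∈ Finset.Ioi s, f t := by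
      intro f
      rw [← Finset.sum_union hdisjI, hunion]
    set A : ℝ := ∑ t ∈ Finset.Iic s, x t with hAdef
    set B : ℝ := ∑ t ∈ Finset.Ioi s, x t with hBdef
    set C : ℝ := ∑ t ∈ Finset.Iic s, y t with hCdef
    set D : ℝ := ∑ t ∈ Finset.Ioi s, y t with hDdef
    have hcardIic : (Finset.Iic s).card = s.val + 1 := Fin.card_Iic s
    have hxlow : ∀ t ∈ Finset.Iic s, 1/((k:ℝ)-1) + δ ≤ x t := by
      intro t ht
      exact le_trans hxs.le (hxanti t s (Finset.mem_Iic.1 ht))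
    have hylow : ∀ t ∈ Finset.Iic s, 1/((k:ℝ)-1) + δ ≤ y t := by
      intro t ht
      exact le_trans hys.le (hyanti t s (Finset.mem_Iic.1 ht))
    have hA : ((s.val:ℝ) + 1) * (1/((k:ℝ)-1) + δ) ≤ A := by
      have := Finset.card_nsmul_le_sum (Finset.Iic s) x (1/((k:ℝ)-1) + δ) hxlow
      rw [hcardIic, nsmul_eq_mul] at this
      exact_mod_cast this
    have hC : ((s.val:ℝ) + 1) * (1/((k:ℝ)-1) + δ) ≤ C := by
      have := Finset.card_nsmul_le_sum (Finset.Iic s) y (1/((k:ℝ)-1) + δ) hylow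
      rw [hcardIic, nsmul_eq_mul] at this
      exact_mod_cast this
    have hB : 0 ≤ B := Finset.sum_nonneg (fun t _ => hxnn t)
    have hD : 0 ≤ D := Finset.sum_nonneg (fun t _ => hynn t)
    by_cases hlast : s.val + 1 < k - 1
    · -- apply the scalar lemma
      have hpm : ((s.val:ℝ)+1) + 1 ≤ (k:ℝ)-1 := by
        have h' : ((s.val + 2 : ℕ) : ℝ) ≤ ((k-1:ℕ):ℝ) := by
          exact_mod_cast (by omega : s.val + 2 ≤ k - 1)
        rw [hmcast] at h'
        push_cast at h'
        linarith
      have hq0 : (0:ℝ) < ((k:ℝ)-1) - ((s.val:ℝ)+1) := by linarith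
      have hcardIoi : ((Finset.Ioi s).card : ℝ) = ((k:ℝ)-1) - ((s.val:ℝ)+1) := by
        have h1 : (Finset.Ioi s).card = (k-1) - 1 - s.val := Fin.card_Ioi s
        have h2 : (k-1) - 1 - s.val = (k-1) - (s.val+1) := by omega
        rw [h1, h2, Nat.cast_sub (by omega : s.val + 1 ≤ k - 1), hmcast]
        push_cast
        ring
      have hp0 : (0:ℝ) < (s.val:ℝ) + 1 := by positivity
      have cheb1 : A * C / ((s.val:ℝ)+1) ≤ ∑ t ∈ Finset.Iic s, x t * y t := by
        have := (hmv.monovaryOn (Finset.Iic s : Set (Fin (k-1)))).sum_mul_sum_le_card_mul_sum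
        rw [hcardIic] at this
        rw [div_le_iff₀ hp0]
        calc A * C ≤ ((s.val + 1 : ℕ) : ℝ) * ∑ t ∈ Finset.Iic s, x t * y t := this
          _ = (∑ t ∈ Finset.Iic s, x t * y t) * ((s.val:ℝ)+1) := by push_cast; ring
      have cheb2 : B * D / (((k:ℝ)-1) - ((s.val:ℝ)+1)) ≤ ∑ t ∈ Finset.Ioi s, x t * y t := by
        have := (hmv.monovaryOn (Finset.Ioi s : Set (Fin (k-1)))).sum_mul_sum_le_card_mul_sum
        rw [div_le_iff₀ hq0]
        calc B * D ≤ ((Finset.Ioi s).card : ℝ) * ∑ t ∈ Finset.Ioi s, x t * y t := this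
          _ = (∑ t ∈ Finset.Ioi s, x t * y t) * (((k:ℝ)-1) - ((s.val:ℝ)+1)) := by
                rw [hcardIoi]; ring
      have hxynn : ∀ t, 0 ≤ x t * y t := fun t => mul_nonneg (hxnn t) (hynn t)
      have hsum : A * C / ((s.val:ℝ)+1) + B * D / (((k:ℝ)-1) - ((s.val:ℝ)+1)) ≤ 1/((k:ℝ)-1) := by
        calc A * C / ((s.val:ℝ)+1) + B * D / (((k:ℝ)-1) - ((s.val:ℝ)+1)) ≤
            (∑ t ∈ Finset.Iic s, x t * y t) + ∑ t ∈ Finset.Ioi s, x t * y t :=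
              add_le_add cheb1 cheb2
          _ = ∑ t, x t * y t := (hsplit (fun t => x t * y t)).symm
          _ ≤ 1/((k:ℝ)-1) := hxysum
      exact scalar ((k:ℝ)-1) ((s.val:ℝ)+1) δ A B C D (by linarith) (by linarith) hpm
        hδ0 hδhalf hA hC hB hD (by rw [hsplit x] at hsx1; linarith)
        (by rw [hsplit y] at hsy1; linarith)
        (by rw [hsplit x] at hsxl; rw [hδsq]; linarith)
        (by rw [hsplit y] at hsyl; rw [hδsq]; linarith) hsum
    · -- s is the last index: A alone already exceeds 1
      have hs1 : s.val + 1 = k - 1 := by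
        have := s.isLt
        omega
      have hbig : ((k:ℝ)-1) * (1/((k:ℝ)-1) + δ) ≤ A := by
        have h2 : ((s.val:ℝ) + 1) = (k:ℝ) - 1 := by
          rw [← hmcast]
          exact_mod_cast hs1
        nth_rw 1 [← h2]
        exact hA
      have hABx : A + B = ∑ t, x t := (hsplit x).symm
      have h3 : ((k:ℝ)-1) * (1/((k:ℝ)-1) + δ) = 1 + ((k:ℝ)-1)*δ := by
        field_simp
      have h4 : 0 < ((k:ℝ)-1)*δ := mul_pos hm0R hδ0
      have h5 : 1 + ((k:ℝ)-1)*δ ≤ A := h3 ▸ hbig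
      have h6 : A + B ≤ 1 := by rw [hABx]; exact hsx1
      linarith [h5, h6, hB, h4]
  refine ⟨part1, ?_⟩
  set I₀ : Finset (Fin ℓ) := (univ : Finset (Fin (k-1))).biUnion
    (fun s => univ.filter
      (fun i : Fin ℓ => (1/((k:ℝ)-1) + δ) * ((P i).card:ℝ) < ((X i s).card : ℝ))) with hI0
  refine ⟨I₀, ?_, ?_⟩
  · calc I₀.card ≤ ∑ s : Fin (k-1), (univ.filter
          (fun i : Fin ℓ => (1/((k:ℝ)-1)+δ)*((P i).card:ℝ) < ((X i s).card:ℝ))).card :=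
        Finset.card_biUnion_le
      _ ≤ ∑ _s : Fin (k-1), 1 := Finset.sum_le_sum (fun s _ => Finset.card_le_one.2
          (fun a ha b hb => part1 s a b (Finset.mem_filter.1 ha).2 (Finset.mem_filter.1 hb).2))
      _ = k - 1 := by simp
  · intro i hi s
    have hnot : ∀ t : Fin (k-1), ((X i t).card : ℝ) ≤ (1/((k:ℝ)-1) + δ) * ((P i).card:ℝ) := by
      intro t
      by_contra h
      push_neg at h
      exact hi (Finset.mem_biUnion.2 ⟨t, Finset.mem_univ t,
        Finset.mem_filter.2 ⟨Finset.mem_univ i, h⟩⟩)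
    have hPi := hPpos i
    constructor
    · -- lower bound
      have hsplit : ((X i s).card : ℝ) + ∑ t ∈ univ.erase s, ((X i t).card:ℝ) =
          ∑ t, ((X i t).card:ℝ) :=
        Finset.add_sum_erase univ (fun t => ((X i t).card : ℝ)) (Finset.mem_univ s)
      have hbound : ∑ t ∈ univ.erase s, ((X i t).card:ℝ) ≤
          ((k:ℝ)-2) * ((1/((k:ℝ)-1)+δ) * ((P i).card:ℝ)) := by
        have h1 := Finset.sum_le_card_nsmul (univ.erase s) (fun t => ((X i t).card:ℝ))
          ((1/((k:ℝ)-1)+δ) * ((P i).card:ℝ)) (fun t _ => hnot t)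
        have h2 : (((univ : Finset (Fin (k-1))).erase s).card : ℝ) = (k:ℝ) - 2 := by
          rw [Finset.card_erase_of_mem (Finset.mem_univ s), Finset.card_univ, Fintype.card_fin]
          rw [Nat.cast_sub (by omega : 1 ≤ k - 1), hmcast]
          push_cast
          ring
        rw [nsmul_eq_mul, h2] at h1
        exact h1
      have hco : ε ≤ 2*δ := by nlinarith [hδsq, hδ0, hδhalf]
      have hexp : ((k:ℝ)-2)*(1/((k:ℝ)-1)+δ) = (1 - 1/((k:ℝ)-1)) + ((k:ℝ)-2)*δ := by
        rw [mul_add]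
        congr 1
        field_simp
        ring
      have hcoef : (1/((k:ℝ)-1) - k*δ) ≤ 1 - ε - ((k:ℝ)-2)*(1/((k:ℝ)-1)+δ) := by
        rw [hexp]
        linarith [hco]
      have hmul := mul_le_mul_of_nonneg_right hcoef hPi.le
      have hlow := hsumXT i
      have hXis : (1 - ε - ((k:ℝ)-2)*(1/((k:ℝ)-1)+δ)) * ((P i).card:ℝ) ≤ ((X i s).card:ℝ) := by
        have hexp2 : (1 - ε - ((k:ℝ)-2)*(1/((k:ℝ)-1)+δ)) * ((P i).card:ℝ) =
            (((P i).card:ℝ) - ε * ((P i).card:ℝ)) -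
              ((k:ℝ)-2) * ((1/((k:ℝ)-1)+δ) * ((P i).card:ℝ)) := by ring
        rw [hexp2]
        linarith [hsplit, hbound, hlow]
      linarith [hmul, hXis]
    · -- upper bound
      have h0 : (0:ℝ) ≤ ((k:ℝ)-1)*δ*((P i).card:ℝ) := by positivity
      have hexp3 : (1/((k:ℝ)-1) + (k:ℝ)*δ) * ((P i).card:ℝ) =
          (1/((k:ℝ)-1) + δ) * ((P i).card:ℝ) + ((k:ℝ)-1)*δ*((P i).card:ℝ) := by ring
      linarith [hnot s, h0, hexp3.le, hexp3.ge]
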